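/- Let P ∈ F_q[T] be a monic irreducible polynomial. Then the polynomial P(−S²) ∈ F_q[S] (obtained by substituting T = −S²) is reducible in F_q[S] if and only if there exist A, B ∈ F_q[T] with P = A² + T·B². -/

import Mathlib

open Polynomial

variable {F : Type} [Field F]

private lemma comp_ne_zero' {f : F[X]} (hf : f ≠ 0) : f.comp (-(X^2)) ≠ 0 := by
  intro h
  rcases (comp_eq_zero_iff).mp h with h | ⟨_, h2⟩
  · exact hf h
  · have : (-(X^2) : F[X]).natDegree = 0 := by rw [h2]; simp
    simp at this

private lemma even_odd_zero {a b : F[X]}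
    (h : a.comp (-(X^2)) + X * b.comp (-(X^2)) = 0) : a = 0 ∧ b = 0 := by
  by_cases ha : a = 0
  · subst ha
    simp only [zero_comp, zero_add, mul_eq_zero] at h
    rcases h with h | h
    · exact absurd h X_ne_zero
    · exact ⟨rfl, by by_contra hb; exact comp_ne_zero' hb h⟩
  by_cases hb : b = 0
  · subst hb
    simp only [zero_comp, mul_zero, add_zero] at h
    exact absurd h (comp_ne_zero' ha)
  exfalso
  have hca : a.comp (-(X^2)) ≠ 0 := comp_ne_zero' ha
  have hcb : (X : F[X]) * b.comp (-(X^2)) ≠ 0 := mul_ne_zero X_ne_zero (comp_ne_zero' hb)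
  have hda : (a.comp (-(X^2))).natDegree = 2 * a.natDegree := by
    rw [natDegree_comp]; simp; ring
  have hdb : ((X : F[X]) * b.comp (-(X^2))).natDegree = 2 * b.natDegree + 1 := by
    rw [natDegree_mul X_ne_zero (comp_ne_zero' hb), natDegree_comp, natDegree_X]
    simp; ring
  have hne : (a.comp (-(X^2))).degree ≠ ((X : F[X]) * b.comp (-(X^2))).degree := by
    rw [degree_eq_natDegree hca, degree_eq_natDegree hcb]
    intro hh
    have := Nat.cast_injective (R := WithBot ℕ) hh
    omega
  rcases lt_or_gt_of_ne hne with hlt | hlt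
  · have := degree_add_eq_right_of_degree_lt hlt
    rw [h] at this
    exact hcb (degree_eq_bot.mp this.symm)
  · have := degree_add_eq_left_of_degree_lt hlt
    rw [h] at this
    exact hca (degree_eq_bot.mp this.symm)

private lemma natDegree_le_one_decomp {r : F[X]} (hr : r.natDegree ≤ 1) :
    ∃ a b : F[X], r = a.comp (-(X^2)) + X * b.comp (-(X^2)) := by
  refine ⟨C (r.coeff 0), C (r.coeff 1), ?_⟩
  conv_lhs => rw [eq_X_add_C_of_natDegree_le_one hr]
  rw [C_comp, C_comp]
  ring

private lemma even_odd_exists (h : F[X]) :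
    ∃ a b : F[X], h = a.comp (-(X^2)) + X * b.comp (-(X^2)) := by
  generalize hn : h.natDegree = n
  induction n using Nat.strong_induction_on generalizing h with
  | _ n ih =>
    by_cases hd : h.natDegree ≤ 1
    · exact natDegree_le_one_decomp hd
    push_neg at hd
    have hmon : (X^2 : F[X]).Monic := monic_X_pow 2
    have hsplit := modByMonic_add_div h (X^2)
    set r := h %ₘ X^2 with hrdef
    set q := h /ₘ X^2 with hqdef
    have hr1 : r.natDegree ≤ 1 := by
      by_cases hr0 : r = 0
      · simp [hr0]
      have := natDegree_lt_natDegree hr0 (degree_modByMonic_lt h hmon)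
      rw [natDegree_X_pow] at this
      omega
    have hqn : q.natDegree < n := by
      rw [natDegree_divByMonic h hmon, natDegree_X_pow, hn]
      omega
    obtain ⟨a, b, hab⟩ := ih q.natDegree hqn q rfl
    obtain ⟨a0, b0, hab0⟩ := natDegree_le_one_decomp hr1
    refine ⟨(-X) * a + a0, (-X) * b + b0, ?_⟩
    rw [← hsplit, hab, hab0]
    simp only [add_comp, mul_comp, neg_comp, X_comp]
    ring

private lemma dvd_descent {g p : F[X]} (h : g.comp (-(X^2)) ∣ p.comp (-(X^2))) : g ∣ p := by
  obtain ⟨m, hm⟩ := h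
  obtain ⟨a, b, hab⟩ := even_odd_exists m
  have key : (g * a - p).comp (-(X^2)) + X * (g * b).comp (-(X^2)) = 0 := by
    rw [sub_comp, mul_comp, mul_comp]
    have hpc : p.comp (-(X^2)) = g.comp (-(X^2)) * (a.comp (-(X^2)) + X * b.comp (-(X^2))) := by
      rw [hm, hab]
    rw [hpc]; ring
  have hkey := (even_odd_zero key).1
  exact ⟨a, by linear_combination -hkey⟩

private lemma norm_identity (a b : F[X]) :
    (a^2 + X*b^2).comp (-(X^2)) =
      (a.comp (-(X^2)) + X * b.comp (-(X^2))) * (a.comp (-(X^2)) - X * b.comp (-(X^2))) := by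
  simp only [add_comp, mul_comp, pow_comp, X_comp]
  ring

private lemma comp_negX_negX (p : F[X]) : (p.comp (-X)).comp (-X) = p := by
  rw [comp_assoc]
  simp

private lemma even_comp_negX (a : F[X]) : (a.comp (-(X^2))).comp (-X) = a.comp (-(X^2)) := by
  rw [comp_assoc]
  congr 1
  simp [neg_pow]

private lemma isUnit_of_comp_negX {p : F[X]} (h : IsUnit (p.comp (-X))) : IsUnit p := by
  obtain ⟨r, hr, hrc⟩ := Polynomial.isUnit_iff.mp h
  have : p = C r := by rw [← comp_negX_negX p, ← hrc, C_comp]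
  rw [this]
  exact hr.map C

private lemma irreducible_comp_negX {p : F[X]} (h : Irreducible p) : Irreducible (p.comp (-X)) := by
  constructor
  · intro hu
    exact h.not_isUnit (isUnit_of_comp_negX hu)
  · intro s t hst
    have hp : p = s.comp (-X) * t.comp (-X) := by
      rw [← mul_comp, ← hst, comp_negX_negX]
    rcases h.isUnit_or_isUnit hp with hu | hu
    · exact Or.inl (isUnit_of_comp_negX hu)
    · exact Or.inr (isUnit_of_comp_negX hu)

private lemma leadingCoeff_sq_form {a b : F[X]} (hab : a^2 + X*b^2 ≠ 0) :
    ∃ d : F, (a^2 + X*b^2).leadingCoeff = d^2 := by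
  by_cases hb : b = 0
  · subst hb
    refine ⟨a.leadingCoeff, ?_⟩
    simp [leadingCoeff_pow]
  by_cases ha : a = 0
  · subst ha
    refine ⟨b.leadingCoeff, ?_⟩
    simp [leadingCoeff_pow, leadingCoeff_mul]
  have ha2 : (a^2 : F[X]) ≠ 0 := pow_ne_zero 2 ha
  have hb2 : (X*b^2 : F[X]) ≠ 0 := mul_ne_zero X_ne_zero (pow_ne_zero 2 hb)
  have hda : (a^2 : F[X]).natDegree = 2 * a.natDegree := natDegree_pow a 2
  have hdb : (X*b^2 : F[X]).natDegree = 2 * b.natDegree + 1 := by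
    rw [natDegree_mul X_ne_zero (pow_ne_zero 2 hb), natDegree_pow, natDegree_X]; ring
  have hne : (a^2 : F[X]).degree ≠ (X*b^2 : F[X]).degree := by
    rw [degree_eq_natDegree ha2, degree_eq_natDegree hb2]
    intro hh
    have := Nat.cast_injective (R := WithBot ℕ) hh
    omega
  rcases lt_or_gt_of_ne hne with hlt | hlt
  · refine ⟨b.leadingCoeff, ?_⟩
    rw [leadingCoeff_add_of_degree_lt hlt]
    simp [leadingCoeff_mul, leadingCoeff_pow]
  · refine ⟨a.leadingCoeff, ?_⟩
    rw [leadingCoeff_add_of_degree_lt' hlt]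
    simp [leadingCoeff_pow]

private lemma two_ne_zero_of_odd_card [Fintype F] (hq : Odd (Fintype.card F)) :
    (2 : F) ≠ 0 := by
  intro h2
  have hchar : ringChar F = 2 := by
    have hdvd := (CharP.cast_eq_zero_iff F (ringChar F) 2).mp (by exact_mod_cast h2)
    have hprime : (ringChar F).Prime := CharP.char_is_prime F (ringChar F)
    exact (Nat.prime_dvd_prime_iff_eq hprime Nat.prime_two).mp hdvd
  have := FiniteField.even_card_iff_char_two.mp hchar
  rcases hq with ⟨k, hk⟩
  omega

/-- For a monic irreducible `P ∈ F_q[T]` (`q` odd), `P(-S²)` is reducible in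
`F_q[S]` if and only if `P = A² + T·B²` for some `A, B ∈ F_q[T]`. -/
theorem reducible_iff_sum_of_squares (F : Type) [Field F] [Fintype F]
    (hq : Odd (Fintype.card F)) (P : F[X]) (hP : P.Monic) (hirr : Irreducible P) :
    ¬ Irreducible (P.comp (-(X ^ 2))) ↔ ∃ A B : F[X], P = A ^ 2 + X * B ^ 2 := by
  have h2 : (2 : F) ≠ 0 := two_ne_zero_of_odd_card hq
  have hPne : P ≠ 0 := hirr.ne_zero
  have hPdeg : 0 < P.natDegree := hP.natDegree_pos.mpr (fun h1 => hirr.not_isUnit (h1 ▸ isUnit_one))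
  constructor
  · intro hnot
    have hQne : P.comp (-(X^2)) ≠ 0 := comp_ne_zero' hPne
    have hQnotunit : ¬ IsUnit (P.comp (-(X^2))) := by
      intro hu
      obtain ⟨r, hr, hrc⟩ := Polynomial.isUnit_iff.mp hu
      have hd0 : (P.comp (-(X^2))).natDegree = 0 := by rw [← hrc]; simp
      rw [natDegree_comp] at hd0
      simp at hd0
      omega
    obtain ⟨π, hπ, hπdvd⟩ := WfDvdMonoid.exists_irreducible_factor hQnotunit hQne
    obtain ⟨a, b, hab⟩ := even_odd_exists π
    have hπ' : π.comp (-X) = a.comp (-(X^2)) - X * b.comp (-(X^2)) := by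
      rw [hab]
      simp only [add_comp, mul_comp, X_comp, even_comp_negX]
      ring
    have hπ'irr : Irreducible (π.comp (-X)) := irreducible_comp_negX hπ
    obtain ⟨m, hm⟩ := hπdvd
    have hπ'dvd : π.comp (-X) ∣ P.comp (-(X^2)) := by
      refine ⟨m.comp (-X), ?_⟩
      conv_lhs => rw [← even_comp_negX P, hm]
      rw [mul_comp]
    have hnorm : π * π.comp (-X) = (a^2 + X*b^2).comp (-(X^2)) := by
      rw [norm_identity, ← hab, ← hπ']
    by_cases hassoc : Associated π (π.comp (-X))
    · -- Case B: π and its conjugate are associates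
      obtain ⟨u, hu⟩ := hassoc
      obtain ⟨c, hc, hcc⟩ := Polynomial.isUnit_iff.mp u.isUnit
      have h1 : a.comp (-(X^2)) - X * b.comp (-(X^2))
          = (a.comp (-(X^2)) + X * b.comp (-(X^2))) * C c := by
        rw [← hπ', ← hab, ← hu, hcc]
      have hkey : (a - C c * a).comp (-(X^2)) + X * ((-b) - C c * b).comp (-(X^2)) = 0 := by
        simp only [sub_comp, mul_comp, C_comp, neg_comp]
        linear_combination h1
      obtain ⟨hA, hB⟩ := even_odd_zero hkey
      have hac : a * (1 - C c) = 0 := by linear_combination hA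
      have hbc : b * (1 + C c) = 0 := by linear_combination -hB
      rcases mul_eq_zero.mp hbc with hb0 | hcb
      · -- b = 0 : π is even, P.comp (-(X^2)) is associate to π, contradiction
        exfalso
        have hπa : π = a.comp (-(X^2)) := by rw [hab, hb0]; simp
        have haP : a ∣ P := dvd_descent (by rw [← hπa]; exact ⟨m, hm⟩)
        have hanu : ¬ IsUnit a := by
          intro hu'
          obtain ⟨r, hr, hrc⟩ := Polynomial.isUnit_iff.mp hu'
          exact hπ.not_isUnit (by rw [hπa, ← hrc, C_comp]; exact hr.map C)
        obtain ⟨t, ht⟩ := haP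
        rcases hirr.isUnit_or_isUnit ht with hu' | hu'
        · exact absurd hu' hanu
        obtain ⟨e, he, hec⟩ := Polynomial.isUnit_iff.mp hu'
        have hQeq : P.comp (-(X^2)) = π * C e := by
          rw [ht, ← hec, mul_comp, C_comp, hπa]
        exact hnot (hQeq ▸ ((associated_mul_unit_right π (C e) (isUnit_C.mpr he)).irreducible hπ))
      · -- c = -1 : π = X * (...), so X ∣ P, hence P = X
        have hc1 : c = -1 := by
          have hCc : C c = C (-1 : F) := by
            rw [map_neg, map_one]; linear_combination hcb
          exact C_injective hCc
        have ha0 : a = 0 := by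
          rcases mul_eq_zero.mp hac with h | h
          · exact h
          · exfalso
            rw [hc1, map_neg, map_one] at h
            have h22 : (C 2 : F[X]) = 0 := by
              rw [map_ofNat]

              linear_combination h
            exact h2 (by simpa using (C_eq_zero.mp h22))
        have hπb : π = X * b.comp (-(X^2)) := by rw [hab, ha0]; simp
        have hXQ : X ∣ P.comp (-(X^2)) :=
          dvd_trans ⟨b.comp (-(X^2)), hπb⟩ ⟨m, hm⟩
        have hP0 : P.coeff 0 = 0 := by
          have h0 := X_dvd_iff.mp hXQ
          rw [coeff_zero_eq_eval_zero, eval_comp] at h0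
          simpa [coeff_zero_eq_eval_zero] using h0
        obtain ⟨t, ht⟩ := X_dvd_iff.mpr hP0
        rcases hirr.isUnit_or_isUnit ht with hu' | hu'
        · exact absurd hu' not_isUnit_X
        obtain ⟨e, he, hec⟩ := Polynomial.isUnit_iff.mp hu'
        have he1 : e = 1 := by
          have hl := hP.leadingCoeff
          rw [ht, ← hec] at hl
          simpa [leadingCoeff_mul] using hl
        refine ⟨0, 1, ?_⟩
        rw [ht, ← hec, he1]
        simp
    · -- Case A: π, π.comp(-X) non-associate; their product descends to P
      have hπ'prime : Prime (π.comp (-X)) := hπ'irr.prime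
      have hπ'ndvd : ¬ π.comp (-X) ∣ π := fun hd => hassoc (hπ'irr.associated_of_dvd hπ hd).symm
      have hm' : π.comp (-X) ∣ m := by
        rcases hπ'prime.dvd_or_dvd (hm ▸ hπ'dvd) with h | h
        · exact absurd h hπ'ndvd
        · exact h
      obtain ⟨m', hm'eq⟩ := hm'
      have hgP : (a^2 + X*b^2) ∣ P := by
        apply dvd_descent
        refine ⟨m', ?_⟩
        rw [← hnorm, hm, hm'eq]
        ring
      have hπne : π ≠ 0 := hπ.ne_zero
      have hπ'ne : π.comp (-X) ≠ 0 := hπ'irr.ne_zero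
      have hgne : a^2 + X*b^2 ≠ 0 := by
        intro h0
        rw [h0] at hnorm
        simp only [zero_comp] at hnorm
        exact (mul_ne_zero hπne hπ'ne) hnorm
      have hgnotunit : ¬ IsUnit (a^2 + X*b^2) := by
        intro hu'
        obtain ⟨r, hr, hrc⟩ := Polynomial.isUnit_iff.mp hu'
        have : π * π.comp (-X) = C r := by rw [hnorm, ← hrc, C_comp]
        exact hπ.not_isUnit (isUnit_of_mul_isUnit_left (this ▸ hr.map C))
      obtain ⟨t, ht⟩ := hgP
      rcases hirr.isUnit_or_isUnit ht with hu' | hu'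
      · exact absurd hu' hgnotunit
      obtain ⟨c, hc, hcc⟩ := Polynomial.isUnit_iff.mp hu'
      obtain ⟨d, hd⟩ := leadingCoeff_sq_form hgne
      have hlc : d^2 * c = 1 := by
        have hl := hP.leadingCoeff
        rw [ht, ← hcc, leadingCoeff_mul, hd, leadingCoeff_C] at hl
        exact hl
      have hdne : d ≠ 0 := by
        intro h0
        rw [h0] at hlc
        simp at hlc
      have hc2 : c = (d⁻¹)^2 := by
        field_simp
        linear_combination hlc
      refine ⟨C d⁻¹ * a, C d⁻¹ * b, ?_⟩
      rw [ht, ← hcc, hc2, map_pow]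
      ring
  · rintro ⟨A, B, hAB⟩ hQirr
    have hfact : P.comp (-(X^2)) =
        (A.comp (-(X^2)) + X * B.comp (-(X^2))) * (A.comp (-(X^2)) - X * B.comp (-(X^2))) := by
      rw [hAB]; exact norm_identity A B
    rcases hQirr.isUnit_or_isUnit hfact with hu | hu
    · obtain ⟨r, hr, hrc⟩ := Polynomial.isUnit_iff.mp hu
      have hkey : (A - C r).comp (-(X^2)) + X * B.comp (-(X^2)) = 0 := by
        rw [sub_comp, C_comp]
        linear_combination -hrc
      obtain ⟨hA0, hB0⟩ := even_odd_zero hkey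
      apply hirr.not_isUnit
      rw [hAB, sub_eq_zero.mp hA0, hB0, ← map_pow]
      have : (C (r^2) : F[X]) + X * 0^2 = C (r^2) := by ring
      rw [this]
      exact (hr.pow 2).map C
    · obtain ⟨r, hr, hrc⟩ := Polynomial.isUnit_iff.mp hu
      have hkey : (A - C r).comp (-(X^2)) + X * (-B).comp (-(X^2)) = 0 := by
        rw [sub_comp, C_comp, neg_comp]
        linear_combination -hrc
      obtain ⟨hA0, hB0⟩ := even_odd_zero hkey
      apply hirr.not_isUnit
      rw [hAB, sub_eq_zero.mp hA0, neg_eq_zero.mp hB0, ← map_pow]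
      have : (C (r^2) : F[X]) + X * 0^2 = C (r^2) := by ring
      rw [this]
      exact (hr.pow 2).map C
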